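/- Let A be an n×n real matrix with Aᵀ * A = 1 (i.e., A is orthogonal). Then det A = (−1)^(rank(1 − A)). -/

import Mathlib

set_option maxHeartbeats 1000000
set_option synthInstance.maxHeartbeats 200000

open Matrix Module Submodule

lemma aux_det_orth {ι : Type*} [Fintype ι] [DecidableEq ι] (B : Matrix ι ι ℝ)
    (hB : Bᵀ * B = 1) (h : (1 - B).det ≠ 0) : B.det = (-1 : ℝ) ^ Fintype.card ι := by
  have key : Bᵀ * (1 - B) = -(1 - B)ᵀ := by
    rw [Matrix.mul_sub, Matrix.mul_one, hB, Matrix.transpose_sub, Matrix.transpose_one, neg_sub]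
  have hd := congrArg Matrix.det key
  rw [Matrix.det_mul, Matrix.det_neg, Matrix.det_transpose, Matrix.det_transpose] at hd
  exact mul_right_cancel₀ h hd

lemma aux_inner_sum {m : ℕ} {F : Type*} [NormedAddCommGroup F] [InnerProductSpace ℝ F]
    (c : OrthonormalBasis (Fin m) ℝ F) (u v : F) :
    ∑ k, c.repr u k * c.repr v k = (inner ℝ u v : ℝ) := by
  rw [← c.repr.inner_map_map u v, PiLp.inner_apply]
  simp only [RCLike.inner_apply, conj_trivial]
  exact Finset.sum_congr rfl (fun _ _ => mul_comm _ _)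

theorem det_orthogonal_eq_neg_one_pow_rank (n : ℕ) (A : Matrix (Fin n) (Fin n) ℝ)
    (hA : Aᵀ * A = 1) :
    A.det = (-1 : ℝ) ^ (1 - A).rank := by
  classical
  set E := EuclideanSpace ℝ (Fin n) with hE
  set f : E →ₗ[ℝ] E := Matrix.toEuclideanLin A with hf
  have hfx : ∀ x : E, f x = (WithLp.equiv 2 (Fin n → ℝ)).symm (A.mulVec (WithLp.equiv 2 (Fin n → ℝ) x)) :=
    fun x => Matrix.toEuclideanLin_apply A x
  have key : ∀ u w : Fin n → ℝ, (A *ᵥ u) ⬝ᵥ (A *ᵥ w) = u ⬝ᵥ w := by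
    intro u w
    rw [Matrix.dotProduct_mulVec, ← Matrix.mulVec_transpose, Matrix.mulVec_mulVec, hA,
      Matrix.one_mulVec]
  have hip : ∀ x y : E, (inner ℝ x y : ℝ) =
      (WithLp.equiv 2 (Fin n → ℝ) x) ⬝ᵥ (WithLp.equiv 2 (Fin n → ℝ) y) := by
    intro x y
    simp only [PiLp.inner_apply, RCLike.inner_apply, conj_trivial, dotProduct]
    change (∑ i, inner ℝ (x i) (y i)) = _
    exact Finset.sum_congr rfl (fun i _ => by simp [mul_comm])
  have hinner : ∀ x y : E, (inner ℝ (f x) (f y) : ℝ) = (inner ℝ x y : ℝ) := by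
    intro x y
    rw [hip, hip, hfx, hfx]
    simp only [Equiv.apply_symm_apply]
    exact key _ _
  set K : Submodule ℝ E := LinearMap.ker (LinearMap.id - f) with hK
  have hKmem : ∀ x : E, x ∈ K ↔ f x = x := by
    intro x
    rw [hK, LinearMap.mem_ker, LinearMap.sub_apply, LinearMap.id_apply, sub_eq_zero, eq_comm]
  have hperp : ∀ y ∈ Kᗮ, f y ∈ Kᗮ := by
    intro y hy
    rw [Submodule.mem_orthogonal] at hy ⊢
    intro x hx
    have h0 : (inner ℝ (f x) (f y) : ℝ) = 0 := by rw [hinner]; exact hy x hx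
    rwa [(hKmem x).mp hx] at h0
  set g : ↥Kᗮ →ₗ[ℝ] ↥Kᗮ := f.restrict hperp with hg
  set e2 := K.prodEquivOfIsCompl Kᗮ K.isCompl_orthogonal with he2
  have hconj : LinearMap.prodMap LinearMap.id g = e2.symm.conj f := by
    apply ((Module.finBasis ℝ K).prod (Module.finBasis ℝ ↥Kᗮ)).ext
    rintro (i | i) <;>
      simp only [Basis.prod_apply, LinearMap.coe_inl, LinearMap.coe_inr, LinearMap.prodMap_apply,
        LinearEquiv.conj_apply, LinearEquiv.symm_symm, Submodule.coe_prodEquivOfIsCompl,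
        LinearMap.coe_comp, LinearEquiv.coe_coe, Function.comp_apply, LinearMap.coprod_apply,
        Submodule.coe_subtype, map_add, Sum.elim_inl, Sum.elim_inr, map_zero,
        ZeroMemClass.coe_zero, add_zero, zero_add, LinearEquiv.eq_symm_apply,
        LinearMap.id_apply, Submodule.coe_prodEquivOfIsCompl',
        LinearMap.restrict_coe_apply, he2, hg]
    exact ((hKmem _).mp (Subtype.mem _)).symm
  have hdetfg : LinearMap.det f = LinearMap.det g := by
    have hdfg1 : LinearMap.det ((LinearMap.id : ↥K →ₗ[ℝ] ↥K).prodMap g) = LinearMap.det f := by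
      rw [hconj]
      exact LinearMap.det_conj f e2.symm
    rw [← hdfg1,
      ← LinearMap.det_toMatrix ((Module.finBasis ℝ K).prod (Module.finBasis ℝ ↥Kᗮ)),
      LinearMap.toMatrix_prodMap, Matrix.det_fromBlocks_zero₂₁, LinearMap.toMatrix_id,
      Matrix.det_one, one_mul, LinearMap.det_toMatrix]
  -- determinant of g via an orthonormal basis
  set d := finrank ℝ ↥Kᗮ with hd
  set c := stdOrthonormalBasis ℝ ↥Kᗮ with hc
  set B := LinearMap.toMatrix c.toBasis c.toBasis g with hB
  have hBentry : ∀ i j, B i j = c.repr (g (c j)) i := by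
    intro i j
    rw [hB, LinearMap.toMatrix_apply, OrthonormalBasis.coe_toBasis_repr_apply,
      OrthonormalBasis.coe_toBasis]
  have hBo : Bᵀ * B = 1 := by
    ext i j
    rw [Matrix.mul_apply, Matrix.one_apply]
    have hterm : ∀ k, Bᵀ i k * B k j = c.repr (g (c i)) k * c.repr (g (c j)) k := by
      intro k
      rw [Matrix.transpose_apply, hBentry, hBentry]
    rw [Finset.sum_congr rfl (fun k _ => hterm k), aux_inner_sum]
    have hgin : (inner ℝ (g (c i)) (g (c j)) : ℝ) = (inner ℝ (c i) (c j) : ℝ) := by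
      rw [Submodule.coe_inner, Submodule.coe_inner, LinearMap.restrict_coe_apply,
        LinearMap.restrict_coe_apply]
      exact hinner _ _
    rw [hgin, orthonormal_iff_ite.mp c.orthonormal i j]
  have h1B : LinearMap.toMatrix c.toBasis c.toBasis (LinearMap.id - g) = 1 - B := by
    rw [map_sub, LinearMap.toMatrix_id]
  have hBne : (1 - B).det ≠ 0 := by
    rw [← h1B, LinearMap.det_toMatrix]
    intro h
    have hlt := LinearMap.bot_lt_ker_of_det_eq_zero h
    have hker : LinearMap.ker (LinearMap.id - g) = ⊥ := by
      apply (Submodule.eq_bot_iff _).mpr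
      intro x hx
      have hgx : g x = x := by
        rw [LinearMap.mem_ker, LinearMap.sub_apply, LinearMap.id_apply, sub_eq_zero] at hx
        exact hx.symm
      have hxK : (x : E) ∈ K := by
        apply (hKmem _).mpr
        have := congrArg (Subtype.val) hgx
        rwa [LinearMap.restrict_coe_apply] at this
      have : (x : E) ∈ (⊥ : Submodule ℝ E) := (K.orthogonal_disjoint).le_bot ⟨hxK, x.2⟩
      exact Subtype.ext (by simpa using this)
    rw [hker] at hlt
    exact lt_irrefl _ hlt
  have hdetB : B.det = (-1 : ℝ) ^ d := by
    have := aux_det_orth B hBo hBne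
    rwa [Fintype.card_fin] at this
  have hdetg : LinearMap.det g = (-1 : ℝ) ^ d := by
    rw [← LinearMap.det_toMatrix c.toBasis g, ← hB, hdetB]
  -- det f = det A
  have hdetfA : LinearMap.det f = A.det := by
    rw [← LinearMap.det_conj f (WithLp.linearEquiv 2 ℝ (Fin n → ℝ))]
    have hc2 : (↑(WithLp.linearEquiv 2 ℝ (Fin n → ℝ)) ∘ₗ f ∘ₗ
        ↑(WithLp.linearEquiv 2 ℝ (Fin n → ℝ)).symm : (Fin n → ℝ) →ₗ[ℝ] (Fin n → ℝ)) =
        Matrix.toLin' A := by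
      apply LinearMap.ext
      intro v
      simp only [LinearMap.coe_comp, LinearEquiv.coe_coe, Function.comp_apply, hfx,
        WithLp.linearEquiv_apply, WithLp.linearEquiv_symm_apply, Equiv.apply_symm_apply,
        Matrix.toLin'_apply]
      rfl
    rw [hc2, LinearMap.det_toLin']
  -- rank computation
  have hrk : (1 - A).rank = d := by
    have h1 : (1 - A).rank + finrank ℝ (LinearMap.ker (1 - A).mulVecLin) = n := by
      have := LinearMap.finrank_range_add_finrank_ker ((1 - A).mulVecLin)
      rwa [Module.finrank_fin_fun] at this
    have h2 : LinearMap.ker ((1 - A).mulVecLin) =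
        K.map (WithLp.linearEquiv 2 ℝ (Fin n → ℝ) : E →ₗ[ℝ] (Fin n → ℝ)) := by
      ext v
      rw [LinearMap.mem_ker, Matrix.mulVecLin_apply, Matrix.sub_mulVec, Matrix.one_mulVec,
        sub_eq_zero]
      constructor
      · intro hv
        refine ⟨(WithLp.equiv 2 (Fin n → ℝ)).symm v, (hKmem _).mpr ?_, rfl⟩
        rw [hfx]
        simp only [Equiv.apply_symm_apply]
        rw [← hv]
      · rintro ⟨x, hxK, rfl⟩
        have := (hKmem x).mp hxK
        rw [hfx] at this
        have := congrArg (WithLp.equiv 2 (Fin n → ℝ)) this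
        simpa using this.symm
    have h3 : finrank ℝ (LinearMap.ker ((1 - A).mulVecLin)) = finrank ℝ K := by
      rw [h2]
      exact LinearEquiv.finrank_map_eq (WithLp.linearEquiv 2 ℝ (Fin n → ℝ)) K
    have h4 : finrank ℝ K + d = n := by
      rw [hd]
      have := Submodule.finrank_add_finrank_orthogonal K
      rwa [finrank_euclideanSpace_fin] at this
    omega
  rw [← hdetfA, hdetfg, hdetg, hrk]
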